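/- Let c > 0, x₁ = 0 and x₂,…,x₅ ∈ ℝ³, and suppose (a, t), (ã, t̃) ∈ ℝ³ × ℝ produce equal arrival times, i.e. t + c⁻¹‖x_k − a‖ = t̃ + c⁻¹‖x_k − ã‖ =: T_k for all k = 1,…,5. If the 4×4 matrix A with rows (x_kᵀ, c²(T₁ − T_k)) for k = 2,…,5 is invertible, then a = ã and t = t̃. -/

import Mathlib

theorem five_point_uniqueness
    (c : ℝ) (hc : 0 < c)
    (x : Fin 5 → EuclideanSpace ℝ (Fin 3)) (hx1 : x 0 = 0)
    (a a' : EuclideanSpace ℝ (Fin 3)) (t t' : ℝ)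
    (T : Fin 5 → ℝ) (hT : ∀ k, T k = t + c⁻¹ * ‖x k - a‖)
    (hEq : ∀ k, t + c⁻¹ * ‖x k - a‖ = t' + c⁻¹ * ‖x k - a'‖)
    (A : Matrix (Fin 4) (Fin 4) ℝ)
    (hA : ∀ i : Fin 4, (∀ j : Fin 3, A i j.castSucc = x i.succ j) ∧
      A i 3 = c ^ 2 * (T 0 - T i.succ))
    (hinv : IsUnit A) :
    a = a' ∧ t = t' := by
  have hc0 : c ≠ 0 := ne_of_gt hc
  have hr : ∀ k, ‖x k - a‖ = c * (T k - t) := by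
    intro k; rw [hT k]; field_simp; ring
  have hT' : ∀ k, T k = t' + c⁻¹ * ‖x k - a'‖ := fun k => by rw [hT k, hEq k]
  have hr' : ∀ k, ‖x k - a'‖ = c * (T k - t') := by
    intro k; rw [hT' k]; field_simp; ring
  have key : ∀ (b : EuclideanSpace ℝ (Fin 3)) (s : ℝ),
      (∀ k, ‖x k - b‖ = c * (T k - s)) →
      ∀ k : Fin 5, 2 * (∑ j, x k j * b j) + 2 * s * (c ^ 2 * (T 0 - T k))
        = ‖x k‖ ^ 2 + c ^ 2 * (T 0) ^ 2 - c ^ 2 * (T k) ^ 2 := by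
    intro b s hb k
    have h1 : ‖x k - b‖ ^ 2 = ‖x k‖ ^ 2 - 2 * (∑ j, x k j * b j) + ‖b‖ ^ 2 := by
      have h := @norm_sub_sq_real (EuclideanSpace ℝ (Fin 3)) _ _ (x k) b
      rw [h]
      congr 2
      simp [PiLp.inner_apply, mul_comm]

    have h3 : ‖b‖ = c * (T 0 - s) := by
      have := hb 0; rwa [hx1, zero_sub, norm_neg] at this
    rw [hb k, h3] at h1
    linear_combination h1
  have hmul : ∀ (b : EuclideanSpace ℝ (Fin 3)) (s : ℝ),
      (∀ k, ‖x k - b‖ = c * (T k - s)) →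
      A.mulVec ![b 0, b 1, b 2, s] = fun i =>
        (‖x i.succ‖ ^ 2 + c ^ 2 * (T 0) ^ 2 - c ^ 2 * (T i.succ) ^ 2) / 2 := by
    intro b s hb
    funext i
    have hk := key b s hb i.succ
    rw [Fin.sum_univ_three] at hk
    have h0 : A i 0 = x i.succ 0 := (hA i).1 0
    have h1 : A i 1 = x i.succ 1 := (hA i).1 1
    have h2 : A i 2 = x i.succ 2 := (hA i).1 2
    have h3 := (hA i).2
    simp only [Matrix.mulVec, dotProduct, Fin.sum_univ_four,
      Matrix.cons_val_zero, Matrix.cons_val_one, Matrix.head_cons,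
      Matrix.cons_val_two, Matrix.tail_cons, Matrix.cons_val_three]
    rw [h0, h1, h2, h3]
    linarith
  have hva := hmul a t hr
  have hvb := hmul a' t' hr'
  have hdet := (Matrix.isUnit_iff_isUnit_det A).mp hinv
  have h := hva.trans hvb.symm
  have h2 := congrArg (A⁻¹.mulVec) h
  rw [Matrix.mulVec_mulVec, Matrix.mulVec_mulVec, Matrix.nonsing_inv_mul A hdet,
    Matrix.one_mulVec, Matrix.one_mulVec] at h2
  have e0 := congrFun h2 0
  have e1 := congrFun h2 1
  have e2 := congrFun h2 2
  have e3 := congrFun h2 3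
  simp only [Matrix.cons_val_zero, Matrix.cons_val_one, Matrix.head_cons,
    Matrix.cons_val_two, Matrix.tail_cons, Matrix.cons_val_three] at e0 e1 e2 e3
  refine ⟨?_, e3⟩
  ext j
  fin_cases j <;> assumption
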